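/- arXiv:1005.1625 — 2 statements merged into one kernel-verified Lean document; each statement's English description precedes it below -/
import Mathlib

section
/- Let A₁, B₁, C₁ be a non-overlapping Napoleon configuration for a nondegenerate triangle ABC in the Euclidean plane, and let A₂, B₂, C₂ be the midpoints of B₁C₁, C₁A₁, A₁B₁ respectively. Let A* = (A+B₂+C₂)/3, B* = (A₂+B₂+C)/3 and C* = (A₂+B+C₂)/3 be the centroids of the equilateral triangles AB₂C₂, A₂B₂C and A₂BC₂. Then the triangle A*B*C* is equilateral and its centroid (A*+B*+C*)/3 equals the centroid G = (A+B+C)/3 of triangle ABC. -/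
open EuclideanGeometry AffineSubspace MeasureTheory

private lemma nap_distsq (x y : EuclideanSpace ℝ (Fin 2)) :
    dist x y ^ 2 = (x 0 - y 0) ^ 2 + (x 1 - y 1) ^ 2 := by
  rw [EuclideanSpace.dist_eq, Real.sq_sqrt (by positivity)]
  simp [Fin.sum_univ_two, Real.dist_eq, sq_abs]

private lemma nap_dpos {x y : EuclideanSpace ℝ (Fin 2)} (h : x ≠ y) :
    0 < (y 0 - x 0) ^ 2 + (y 1 - x 1) ^ 2 := by
  by_contra hc
  push_neg at hc
  apply h
  have h0 : (y 0 - x 0) ^ 2 = 0 :=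
    le_antisymm (by nlinarith [sq_nonneg (y 1 - x 1)]) (sq_nonneg _)
  have h1 : (y 1 - x 1) ^ 2 = 0 :=
    le_antisymm (by nlinarith [sq_nonneg (y 0 - x 0)]) (sq_nonneg _)
  have h0' := sub_eq_zero.mp (pow_eq_zero_iff two_ne_zero |>.mp h0)
  have h1' := sub_eq_zero.mp (pow_eq_zero_iff two_ne_zero |>.mp h1)
  ext i; fin_cases i
  · exact h0'.symm
  · exact h1'.symm

private lemma nap_apex (b0 b1 c0 c1 p0 p1 : ℝ)
    (hd : 0 < (c0 - b0) ^ 2 + (c1 - b1) ^ 2)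
    (h1 : (p0 - b0) ^ 2 + (p1 - b1) ^ 2 = (b0 - c0) ^ 2 + (b1 - c1) ^ 2)
    (h2 : (p0 - c0) ^ 2 + (p1 - c1) ^ 2 = (b0 - c0) ^ 2 + (b1 - c1) ^ 2) :
    ∃ t : ℝ, t ^ 2 = 3 / 4 ∧ p0 = (b0 + c0) / 2 - t * (c1 - b1) ∧
      p1 = (b1 + c1) / 2 + t * (c0 - b0) := by
  have hd0 : (c0 - b0) ^ 2 + (c1 - b1) ^ 2 ≠ 0 := ne_of_gt hd
  have hortho : (c0 - b0) * (p0 - (b0 + c0) / 2) + (c1 - b1) * (p1 - (b1 + c1) / 2) = 0 := by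
    linear_combination (h1 - h2) / 2
  have hv : (p0 - (b0 + c0) / 2) ^ 2 + (p1 - (b1 + c1) / 2) ^ 2 =
      3 / 4 * ((c0 - b0) ^ 2 + (c1 - b1) ^ 2) := by
    linear_combination h1 - hortho
  set d : ℝ := (c0 - b0) ^ 2 + (c1 - b1) ^ 2 with hdef
  set cr : ℝ := (c0 - b0) * (p1 - (b1 + c1) / 2) - (c1 - b1) * (p0 - (b0 + c0) / 2) with hcr
  refine ⟨cr / d, ?_, ?_, ?_⟩
  · apply mul_right_cancel₀ (pow_ne_zero 2 hd0)
    have e : (cr / d) ^ 2 * d ^ 2 = cr ^ 2 := by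
      rw [div_pow, div_mul_cancel₀ _ (pow_ne_zero 2 hd0)]
    rw [e, hcr, hdef]
    linear_combination ((c0 - b0) ^ 2 + (c1 - b1) ^ 2) * hv -
      ((c0 - b0) * (p0 - (b0 + c0) / 2) + (c1 - b1) * (p1 - (b1 + c1) / 2)) * hortho
  · apply mul_right_cancel₀ hd0
    have e : cr / d * (c1 - b1) * d = cr * (c1 - b1) := by
      field_simp
    rw [sub_mul, e, hcr, hdef]
    linear_combination (c0 - b0) * hortho
  · apply mul_right_cancel₀ hd0
    have e : cr / d * (c0 - b0) * d = cr * (c0 - b0) := by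
      field_simp
    rw [add_mul, e, hcr, hdef]
    linear_combination (c1 - b1) * hortho

private lemma nap_mem_of_cross_eq (B C P : EuclideanSpace ℝ (Fin 2))
    (hd : 0 < (C 0 - B 0) ^ 2 + (C 1 - B 1) ^ 2)
    (h : (C 0 - B 0) * (P 1 - B 1) - (C 1 - B 1) * (P 0 - B 0) = 0) :
    P ∈ affineSpan ℝ ({B, C} : Set (EuclideanSpace ℝ (Fin 2))) := by
  have hd0 : (C 0 - B 0) ^ 2 + (C 1 - B 1) ^ 2 ≠ 0 := ne_of_gt hd
  set r : ℝ := ((P 0 - B 0) * (C 0 - B 0) + (P 1 - B 1) * (C 1 - B 1)) /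
    ((C 0 - B 0) ^ 2 + (C 1 - B 1) ^ 2) with hr
  have hP : P = r • (C -ᵥ B) +ᵥ B := by
    ext i
    fin_cases i
    · show P 0 = r * (C 0 - B 0) + B 0
      rw [hr]; field_simp; linear_combination (-(C 1 - B 1)) * h
    · show P 1 = r * (C 1 - B 1) + B 1
      rw [hr]; field_simp; linear_combination ((C 0 - B 0)) * h
  rw [hP]
  exact smul_vsub_vadd_mem_affineSpan_pair r B C

private lemma nap_side (B C X P : EuclideanSpace ℝ (Fin 2))
    (hd : 0 < (C 0 - B 0) ^ 2 + (C 1 - B 1) ^ 2)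
    (hs : (affineSpan ℝ ({B, C} : Set (EuclideanSpace ℝ (Fin 2)))).SOppSide X P) :
    ((C 0 - B 0) * (X 1 - B 1) - (C 1 - B 1) * (X 0 - B 0)) *
      ((C 0 - B 0) * (P 1 - B 1) - (C 1 - B 1) * (P 0 - B 0)) < 0 := by
  obtain ⟨⟨p₁, hp₁, p₂, hp₂, hray⟩, hX, hP⟩ := hs
  have hXc : (C 0 - B 0) * (X 1 - B 1) - (C 1 - B 1) * (X 0 - B 0) ≠ 0 := fun h =>
    hX (nap_mem_of_cross_eq B C X hd h)
  have hPc : (C 0 - B 0) * (P 1 - B 1) - (C 1 - B 1) * (P 0 - B 0) ≠ 0 := fun h =>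
    hP (nap_mem_of_cross_eq B C P hd h)
  rcases hray with h0 | h0 | ⟨r₁, r₂, hr₁, hr₂, heq⟩
  · exact absurd (by rw [vsub_eq_zero_iff_eq.mp h0]; exact hp₁) hX
  · exact absurd (by rw [← vsub_eq_zero_iff_eq.mp h0]; exact hp₂) hP
  · have hm1 : (p₁ -ᵥ B) +ᵥ B ∈ affineSpan ℝ ({B, C} : Set (EuclideanSpace ℝ (Fin 2))) := by
      rwa [vsub_vadd]
    have hm2 : (p₂ -ᵥ B) +ᵥ B ∈ affineSpan ℝ ({B, C} : Set (EuclideanSpace ℝ (Fin 2))) := by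
      rwa [vsub_vadd]
    obtain ⟨s₁, hs₁⟩ := vadd_left_mem_affineSpan_pair.mp hm1
    obtain ⟨s₂, hs₂⟩ := vadd_left_mem_affineSpan_pair.mp hm2
    have hp10 : p₁ 0 - B 0 = s₁ * (C 0 - B 0) := by have h := congrArg (fun v => v 0) hs₁; simp at h; linarith
    have hp11 : p₁ 1 - B 1 = s₁ * (C 1 - B 1) := by have h := congrArg (fun v => v 1) hs₁; simp at h; linarith
    have hp20 : p₂ 0 - B 0 = s₂ * (C 0 - B 0) := by have h := congrArg (fun v => v 0) hs₂; simp at h; linarith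
    have hp21 : p₂ 1 - B 1 = s₂ * (C 1 - B 1) := by have h := congrArg (fun v => v 1) hs₂; simp at h; linarith
    have e0 : r₁ * (X 0 - p₁ 0) = r₂ * (p₂ 0 - P 0) := by have h := congrArg (fun v => v 0) heq; simp at h; linarith
    have e1 : r₁ * (X 1 - p₁ 1) = r₂ * (p₂ 1 - P 1) := by have h := congrArg (fun v => v 1) heq; simp at h; linarith
    set cX := (C 0 - B 0) * (X 1 - B 1) - (C 1 - B 1) * (X 0 - B 0) with hcX
    set cP := (C 0 - B 0) * (P 1 - B 1) - (C 1 - B 1) * (P 0 - B 0) with hcP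
    have hkey : r₁ * cX + r₂ * cP = 0 := by
      rw [hcX, hcP]
      linear_combination (C 0 - B 0) * e1 - (C 1 - B 1) * e0 +
        (C 0 - B 0) * r₁ * hp11 + (C 0 - B 0) * r₂ * hp21 -
        (C 1 - B 1) * r₁ * hp10 - (C 1 - B 1) * r₂ * hp20
    have hcP2 : 0 < cP ^ 2 := by
      rcases lt_or_gt_of_ne hPc with h | h <;> nlinarith
    have h2 : r₁ * (cX * cP) = -(r₂ * cP ^ 2) := by linear_combination cP * hkey
    by_contra hcon
    push_neg at hcon
    linarith [mul_nonneg hr₁.le hcon, mul_pos hr₂ hcP2]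

private lemma nap_t_eq {σ d e t s : ℝ} (hd : 0 < d) (he : 0 < e)
    (h1 : σ * (t * d) < 0) (h2 : σ * (s * e) < 0)
    (ht : t ^ 2 = 3 / 4) (hs : s ^ 2 = 3 / 4) : t = s := by
  have hts : 0 < t * s := by
    nlinarith [mul_pos_of_neg_of_neg h1 h2, mul_nonneg (sq_nonneg σ) (mul_pos hd he).le]
  have h9 : (t * s - 3 / 4) * (t * s + 3 / 4) = 0 := by
    linear_combination s ^ 2 * ht + (3 / 4) * hs
  rcases mul_eq_zero.mp h9 with h | h
  · have hz : (t - s) ^ 2 = 0 := by linear_combination ht + hs - 2 * h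
    exact sub_eq_zero.mp (pow_eq_zero_iff two_ne_zero |>.mp hz)
  · linarith

theorem napoleon_star_triangle
    (A B C A₁ B₁ C₁ : EuclideanSpace ℝ (Fin 2))
    (hABC : AffineIndependent ℝ ![A, B, C])
    (hA₁ : dist A₁ B = dist B C) (hA₁' : dist A₁ C = dist B C)
    (hB₁ : dist A B₁ = dist A C) (hB₁' : dist B₁ C = dist A C)
    (hC₁ : dist A C₁ = dist A B) (hC₁' : dist B C₁ = dist A B)
    (hsideA : (affineSpan ℝ {B, C}).SOppSide A A₁)
    (hsideB : (affineSpan ℝ {C, A}).SOppSide B B₁)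
    (hsideC : (affineSpan ℝ {A, B}).SOppSide C C₁)
    (A₂ B₂ C₂ Astar Bstar Cstar : EuclideanSpace ℝ (Fin 2))
    (hA₂ : A₂ = (2:ℝ)⁻¹ • (B₁ + C₁))
    (hB₂ : B₂ = (2:ℝ)⁻¹ • (C₁ + A₁))
    (hC₂ : C₂ = (2:ℝ)⁻¹ • (A₁ + B₁))
    (hAstar : Astar = (3:ℝ)⁻¹ • (A + B₂ + C₂))
    (hBstar : Bstar = (3:ℝ)⁻¹ • (A₂ + B₂ + C))
    (hCstar : Cstar = (3:ℝ)⁻¹ • (A₂ + B + C₂)) :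
    (dist Astar Bstar = dist Bstar Cstar ∧ dist Bstar Cstar = dist Cstar Astar) ∧
      (3:ℝ)⁻¹ • (Astar + Bstar + Cstar) = (3:ℝ)⁻¹ • (A + B + C) := by
  -- distinctness of vertices
  have hBC : B ≠ C := by
    intro h
    have h12 : (![A, B, C] : Fin 3 → _) 1 = ![A, B, C] 2 := by simpa using h
    have := hABC.injective h12
    simp at this
  have hCA : C ≠ A := by
    intro h
    have h12 : (![A, B, C] : Fin 3 → _) 2 = ![A, B, C] 0 := by simpa using h
    have := hABC.injective h12
    simp at this
  have hAB : A ≠ B := by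
    intro h
    have h12 : (![A, B, C] : Fin 3 → _) 0 = ![A, B, C] 1 := by simpa using h
    have := hABC.injective h12
    simp at this
  have hdA : 0 < (C 0 - B 0) ^ 2 + (C 1 - B 1) ^ 2 := nap_dpos hBC
  have hdB : 0 < (A 0 - C 0) ^ 2 + (A 1 - C 1) ^ 2 := nap_dpos hCA
  have hdC : 0 < (B 0 - A 0) ^ 2 + (B 1 - A 1) ^ 2 := nap_dpos hAB
  -- squared-distance versions of the equilateral hypotheses
  have sqA : (A₁ 0 - B 0) ^ 2 + (A₁ 1 - B 1) ^ 2 = (B 0 - C 0) ^ 2 + (B 1 - C 1) ^ 2 := by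
    have := congrArg (· ^ 2) hA₁; simpa only [nap_distsq] using this
  have sqA' : (A₁ 0 - C 0) ^ 2 + (A₁ 1 - C 1) ^ 2 = (B 0 - C 0) ^ 2 + (B 1 - C 1) ^ 2 := by
    have := congrArg (· ^ 2) hA₁'; simpa only [nap_distsq] using this
  have sqB : (A 0 - B₁ 0) ^ 2 + (A 1 - B₁ 1) ^ 2 = (A 0 - C 0) ^ 2 + (A 1 - C 1) ^ 2 := by
    have := congrArg (· ^ 2) hB₁; simpa only [nap_distsq] using this
  have sqB' : (B₁ 0 - C 0) ^ 2 + (B₁ 1 - C 1) ^ 2 = (A 0 - C 0) ^ 2 + (A 1 - C 1) ^ 2 := by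
    have := congrArg (· ^ 2) hB₁'; simpa only [nap_distsq] using this
  have sqC : (A 0 - C₁ 0) ^ 2 + (A 1 - C₁ 1) ^ 2 = (A 0 - B 0) ^ 2 + (A 1 - B 1) ^ 2 := by
    have := congrArg (· ^ 2) hC₁; simpa only [nap_distsq] using this
  have sqC' : (B 0 - C₁ 0) ^ 2 + (B 1 - C₁ 1) ^ 2 = (A 0 - B 0) ^ 2 + (A 1 - B 1) ^ 2 := by
    have := congrArg (· ^ 2) hC₁'; simpa only [nap_distsq] using this
  -- apex characterizations
  obtain ⟨ta, hta, ha0, ha1⟩ := nap_apex (B 0) (B 1) (C 0) (C 1) (A₁ 0) (A₁ 1) hdA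
    (by linear_combination sqA) (by linear_combination sqA')
  obtain ⟨tb, htb, hb0, hb1⟩ := nap_apex (C 0) (C 1) (A 0) (A 1) (B₁ 0) (B₁ 1) hdB
    (by linear_combination sqB') (by linear_combination sqB)
  obtain ⟨tc, htc, hc0, hc1⟩ := nap_apex (A 0) (A 1) (B 0) (B 1) (C₁ 0) (C₁ 1) hdC
    (by linear_combination sqC) (by linear_combination sqC')
  -- sign conditions from the side hypotheses
  have s1 := nap_side B C A A₁ hdA hsideA
  have s2 := nap_side C A B B₁ hdB hsideB
  have s3 := nap_side A B C C₁ hdC hsideC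
  set σ := (C 0 - B 0) * (A 1 - B 1) - (C 1 - B 1) * (A 0 - B 0) with hσ
  have s1' : σ * (ta * ((C 0 - B 0) ^ 2 + (C 1 - B 1) ^ 2)) < 0 := by
    rw [ha0, ha1] at s1; rw [hσ]; linear_combination s1
  have s2' : σ * (tb * ((A 0 - C 0) ^ 2 + (A 1 - C 1) ^ 2)) < 0 := by
    rw [hb0, hb1] at s2; rw [hσ]; linear_combination s2
  have s3' : σ * (tc * ((B 0 - A 0) ^ 2 + (B 1 - A 1) ^ 2)) < 0 := by
    rw [hc0, hc1] at s3; rw [hσ]; linear_combination s3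
  have htbe : tb = ta := nap_t_eq hdB hdA s2' s1' htb hta
  have htce : tc = ta := nap_t_eq hdC hdA s3' s1' htc hta
  subst htbe htce
  -- coordinates of the derived points
  have hA₂0 : A₂ 0 = (2:ℝ)⁻¹ * (B₁ 0 + C₁ 0) := by rw [hA₂]; rfl
  have hA₂1 : A₂ 1 = (2:ℝ)⁻¹ * (B₁ 1 + C₁ 1) := by rw [hA₂]; rfl
  have hB₂0 : B₂ 0 = (2:ℝ)⁻¹ * (C₁ 0 + A₁ 0) := by rw [hB₂]; rfl
  have hB₂1 : B₂ 1 = (2:ℝ)⁻¹ * (C₁ 1 + A₁ 1) := by rw [hB₂]; rfl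
  have hC₂0 : C₂ 0 = (2:ℝ)⁻¹ * (A₁ 0 + B₁ 0) := by rw [hC₂]; rfl
  have hC₂1 : C₂ 1 = (2:ℝ)⁻¹ * (A₁ 1 + B₁ 1) := by rw [hC₂]; rfl
  have hAs0 : Astar 0 = (3:ℝ)⁻¹ * (A 0 + B₂ 0 + C₂ 0) := by rw [hAstar]; rfl
  have hAs1 : Astar 1 = (3:ℝ)⁻¹ * (A 1 + B₂ 1 + C₂ 1) := by rw [hAstar]; rfl
  have hBs0 : Bstar 0 = (3:ℝ)⁻¹ * (A₂ 0 + B₂ 0 + C 0) := by rw [hBstar]; rfl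
  have hBs1 : Bstar 1 = (3:ℝ)⁻¹ * (A₂ 1 + B₂ 1 + C 1) := by rw [hBstar]; rfl
  have hCs0 : Cstar 0 = (3:ℝ)⁻¹ * (A₂ 0 + B 0 + C₂ 0) := by rw [hCstar]; rfl
  have hCs1 : Cstar 1 = (3:ℝ)⁻¹ * (A₂ 1 + B 1 + C₂ 1) := by rw [hCstar]; rfl
  have hsq1 : dist Astar Bstar ^ 2 = dist Bstar Cstar ^ 2 := by
    rw [nap_distsq, nap_distsq]
    simp only [hAs0, hAs1, hBs0, hBs1, hCs0, hCs1, hA₂0, hA₂1, hB₂0, hB₂1, hC₂0, hC₂1,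
      ha0, ha1, hb0, hb1, hc0, hc1]
    linear_combination ((B 0 ^ 2 + B 1 ^ 2 - A 0 ^ 2 - A 1 ^ 2) / 12 +
      (A 0 * C 0 + A 1 * C 1 - B 0 * C 0 - B 1 * C 1) / 6) * hta
  have hsq2 : dist Bstar Cstar ^ 2 = dist Cstar Astar ^ 2 := by
    rw [nap_distsq, nap_distsq]
    simp only [hAs0, hAs1, hBs0, hBs1, hCs0, hCs1, hA₂0, hA₂1, hB₂0, hB₂1, hC₂0, hC₂1,
      ha0, ha1, hb0, hb1, hc0, hc1]
    linear_combination (-(C 0 ^ 2 + C 1 ^ 2) / 12 + (B 0 * C 0 + B 1 * C 1) / 6 -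
      (A 0 * B 0 + A 1 * B 1) / 6 + (A 0 ^ 2 + A 1 ^ 2) / 12) * hta
  refine ⟨⟨?_, ?_⟩, ?_⟩
  · have := congrArg Real.sqrt hsq1
    rwa [Real.sqrt_sq dist_nonneg, Real.sqrt_sq dist_nonneg] at this
  · have := congrArg Real.sqrt hsq2
    rwa [Real.sqrt_sq dist_nonneg, Real.sqrt_sq dist_nonneg] at this
  · ext i
    fin_cases i
    · show (3:ℝ)⁻¹ * (Astar 0 + Bstar 0 + Cstar 0) = (3:ℝ)⁻¹ * (A 0 + B 0 + C 0)
      simp only [hAs0, hBs0, hCs0, hA₂0, hB₂0, hC₂0, ha0, hb0, hc0]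
      ring
    · show (3:ℝ)⁻¹ * (Astar 1 + Bstar 1 + Cstar 1) = (3:ℝ)⁻¹ * (A 1 + B 1 + C 1)
      simp only [hAs1, hBs1, hCs1, hA₂1, hB₂1, hC₂1, ha1, hb1, hc1]
      ring
end

section
/- Let A₁, B₁, C₁ be a non-overlapping Napoleon configuration for a nondegenerate triangle ABC in the Euclidean plane, let A₂ and B₂ be the midpoints of B₁C₁ and C₁A₁, and let C* = (A₂+B₂+C)/3 be the centroid of the equilateral triangle A₂B₂C. Let C₁' be the apex of the equilateral triangle on side AB lying strictly on the same side of line AB as C (dist A C₁' = dist B C₁' = dist A B), and let G₃' = (A+B+C₁')/3 be its centroid. Then C* is the image of G₃' under the homothety with center G = (A+B+C)/3 and ratio −1/2: C* − G = −(1/2)·(G₃' − G). -/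
open EuclideanGeometry AffineSubspace MeasureTheory

private lemma dist_sq_coord (u w : EuclideanSpace ℝ (Fin 2)) :
    dist u w ^ 2 = (u 0 - w 0)^2 + (u 1 - w 1)^2 := by
  rw [EuclideanSpace.dist_eq, Real.sq_sqrt (by positivity)]
  simp [Fin.sum_univ_two, Real.dist_eq, sq_abs]

private lemma ne_coord {X Y : EuclideanSpace ℝ (Fin 2)} (hXY : X ≠ Y) :
    0 < (Y 0 - X 0) ^ 2 + (Y 1 - X 1) ^ 2 := by
  rcases eq_or_ne (Y 0) (X 0) with h0 | h0
  · rcases eq_or_ne (Y 1) (X 1) with h1 | h1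
    · exact absurd (by ext i; fin_cases i <;> simpa using by first | exact h0 | exact h1) hXY.symm
    · have h1' : Y 1 - X 1 ≠ 0 := sub_ne_zero.mpr h1
      positivity
  · have h0' : Y 0 - X 0 ≠ 0 := sub_ne_zero.mpr h0
    positivity

private lemma mem_line_iff {X Y : EuclideanSpace ℝ (Fin 2)} (hXY : X ≠ Y)
    (P : EuclideanSpace ℝ (Fin 2)) :
    P ∈ affineSpan ℝ ({X, Y} : Set (EuclideanSpace ℝ (Fin 2))) ↔
      (P 0 - X 0) * (Y 1 - X 1) - (P 1 - X 1) * (Y 0 - X 0) = 0 := by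
  have hmem : P ∈ affineSpan ℝ ({X, Y} : Set (EuclideanSpace ℝ (Fin 2))) ↔
      ∃ r : ℝ, r • (Y - X) = P - X := by
    conv_lhs => rw [show P = (P - X) +ᵥ X by simp]
    exact vadd_left_mem_affineSpan_pair
  rw [hmem]
  constructor
  · rintro ⟨r, hr⟩
    have h0 := congrArg (· 0) hr
    have h1 := congrArg (· 1) hr
    simp only [PiLp.smul_apply, PiLp.sub_apply, smul_eq_mul] at h0 h1
    linear_combination (Y 0 - X 0) * h1 - (Y 1 - X 1) * h0
  · intro hg
    rcases eq_or_ne (Y 0) (X 0) with h0 | h0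
    · have h1 : Y 1 - X 1 ≠ 0 := by
        intro h
        exact hXY.symm (by ext i; fin_cases i <;> simpa using by first | exact h0 | linarith)
      have hP0 : P 0 = X 0 := by
        have hz : (P 0 - X 0) * (Y 1 - X 1) = 0 := by
          linear_combination hg + (P 1 - X 1) * (sub_eq_zero.mpr h0)
        rcases mul_eq_zero.mp hz with h | h
        · linarith
        · exact absurd h h1
      refine ⟨(P 1 - X 1) / (Y 1 - X 1), ?_⟩
      ext i
      fin_cases i
      · show (P 1 - X 1) / (Y 1 - X 1) * (Y 0 - X 0) = P 0 - X 0
        rw [h0, hP0]; ring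
      · show (P 1 - X 1) / (Y 1 - X 1) * (Y 1 - X 1) = P 1 - X 1
        exact div_mul_cancel₀ _ h1
    · have h0' : Y 0 - X 0 ≠ 0 := sub_ne_zero.mpr h0
      refine ⟨(P 0 - X 0) / (Y 0 - X 0), ?_⟩
      ext i
      fin_cases i
      · show (P 0 - X 0) / (Y 0 - X 0) * (Y 0 - X 0) = P 0 - X 0
        exact div_mul_cancel₀ _ h0'
      · show (P 0 - X 0) / (Y 0 - X 0) * (Y 1 - X 1) = P 1 - X 1
        field_simp
        linear_combination hg

private lemma oppside_sign {X Y x y : EuclideanSpace ℝ (Fin 2)} (hXY : X ≠ Y)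
    (h : (affineSpan ℝ ({X, Y} : Set (EuclideanSpace ℝ (Fin 2)))).SOppSide x y) :
    ((x 0 - X 0) * (Y 1 - X 1) - (x 1 - X 1) * (Y 0 - X 0)) *
      ((y 0 - X 0) * (Y 1 - X 1) - (y 1 - X 1) * (Y 0 - X 0)) < 0 := by
  have hx : (x 0 - X 0) * (Y 1 - X 1) - (x 1 - X 1) * (Y 0 - X 0) ≠ 0 :=
    fun hc => h.left_notMem ((mem_line_iff hXY x).mpr hc)
  have hy : (y 0 - X 0) * (Y 1 - X 1) - (y 1 - X 1) * (Y 0 - X 0) ≠ 0 :=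
    fun hc => h.right_notMem ((mem_line_iff hXY y).mpr hc)
  obtain ⟨p, hp, hsb⟩ := h.exists_sbtw
  obtain ⟨r, ⟨hr0, hr1⟩, hlp⟩ := hsb.wbtw
  have hp0 : p 0 = x 0 + r * (y 0 - x 0) := by
    have := congrArg (· 0) hlp.symm
    simp only [AffineMap.lineMap_apply, vsub_eq_sub, vadd_eq_add,
      PiLp.add_apply, PiLp.smul_apply, PiLp.sub_apply, smul_eq_mul] at this
    linarith [this]
  have hp1 : p 1 = x 1 + r * (y 1 - x 1) := by
    have := congrArg (· 1) hlp.symm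
    simp only [AffineMap.lineMap_apply, vsub_eq_sub, vadd_eq_add,
      PiLp.add_apply, PiLp.smul_apply, PiLp.sub_apply, smul_eq_mul] at this
    linarith [this]
  have hgp : (p 0 - X 0) * (Y 1 - X 1) - (p 1 - X 1) * (Y 0 - X 0) = 0 :=
    (mem_line_iff hXY p).mp hp
  rw [hp0, hp1] at hgp
  set gx := (x 0 - X 0) * (Y 1 - X 1) - (x 1 - X 1) * (Y 0 - X 0) with hgx
  set gy := (y 0 - X 0) * (Y 1 - X 1) - (y 1 - X 1) * (Y 0 - X 0) with hgy
  have hlin : (1 - r) * gx + r * gy = 0 := by rw [hgx, hgy]; linear_combination hgp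
  rcases lt_trichotomy (gx * gy) 0 with h | h | h
  · exact h
  · rcases mul_eq_zero.mp h with h' | h'
    exacts [absurd h' hx, absurd h' hy]
  · exfalso
    have hr0' : r ≠ 0 := fun hc => hx (by rw [hc] at hlin; linarith)
    have hr1' : r ≠ 1 := fun hc => hy (by rw [hc] at hlin; linarith)
    have h1 : 0 < r := lt_of_le_of_ne hr0 (Ne.symm hr0')
    have h2 : r < 1 := lt_of_le_of_ne hr1 hr1'
    have hgy2 : 0 < gy ^ 2 := by positivity
    have hkey : (1 - r) * (gx * gy) = -(r * gy ^ 2) := by linear_combination gy * hlin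
    have t1 : 0 < (1 - r) * (gx * gy) := mul_pos (by linarith) h
    have t2 : 0 < r * gy ^ 2 := mul_pos h1 hgy2
    linarith

private lemma apex_alg {x0 x1 y0 y1 p0 p1 : ℝ}
    (hL : 0 < (y0 - x0) ^ 2 + (y1 - x1) ^ 2)
    (e1 : (p0 - x0)^2 + (p1 - x1)^2 = (x0 - y0)^2 + (x1 - y1)^2)
    (e2 : (p0 - y0)^2 + (p1 - y1)^2 = (x0 - y0)^2 + (x1 - y1)^2) :
    ∃ t : ℝ, t ^ 2 = 3 / 4 ∧ p0 = (x0 + y0) / 2 - t * (y1 - x1) ∧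
      p1 = (x1 + y1) / 2 + t * (y0 - x0) := by
  have hLne : (y0 - x0) ^ 2 + (y1 - x1) ^ 2 ≠ 0 := ne_of_gt hL
  have orth : (p0 - (x0 + y0)/2) * (y0 - x0) + (p1 - (x1 + y1)/2) * (y1 - x1) = 0 := by
    linear_combination (1/2) * e1 - (1/2) * e2
  have norm2 : (p0 - (x0 + y0)/2)^2 + (p1 - (x1 + y1)/2)^2
      = 3/4 * ((y0 - x0)^2 + (y1 - x1)^2) := by
    linear_combination e1 - orth
  refine ⟨((p1 - (x1 + y1)/2) * (y0 - x0) - (p0 - (x0 + y0)/2) * (y1 - x1)) /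
    ((y0 - x0)^2 + (y1 - x1)^2), ?_, ?_, ?_⟩
  · rw [div_pow, div_eq_iff (by positivity)]
    linear_combination ((y0 - x0)^2 + (y1 - x1)^2) * norm2 -
      ((p0 - (x0 + y0)/2) * (y0 - x0) + (p1 - (x1 + y1)/2) * (y1 - x1)) * orth
  · field_simp
    linear_combination 2 * (y0 - x0) * orth
  · field_simp
    linear_combination 2 * (y1 - x1) * orth

private lemma sign_eq_of_sq {x y : ℝ} (hx : x ^ 2 = 3 / 4) (hy : y ^ 2 = 3 / 4)
    (h : 0 < x * y) : x = y := by
  have h34 : (x * y - 3 / 4) * (x * y + 3 / 4) = 0 := by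
    linear_combination y ^ 2 * hx + (3/4) * hy
  rcases mul_eq_zero.mp h34 with h' | h'
  · have hsq : (x - y) ^ 2 = 0 := by linear_combination hx + hy - 2 * h'
    have := pow_eq_zero_iff (n := 2) (by norm_num) |>.mp hsq
    linarith
  · linarith [h, (by linarith : x * y = -(3/4))]

private lemma apex_pt {X Y P : EuclideanSpace ℝ (Fin 2)} (hXY : X ≠ Y)
    (h1 : dist P X = dist X Y) (h2 : dist P Y = dist X Y) :
    ∃ t : ℝ, t ^ 2 = 3 / 4 ∧ P 0 = (X 0 + Y 0) / 2 - t * (Y 1 - X 1) ∧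
      P 1 = (X 1 + Y 1) / 2 + t * (Y 0 - X 0) := by
  refine apex_alg (ne_coord hXY) ?_ ?_
  · rw [← dist_sq_coord P X, h1, dist_sq_coord X Y]
  · rw [← dist_sq_coord P Y, h2, dist_sq_coord X Y]


private lemma pos_aux {t D L P : ℝ} (hP : P < 0) (hL : 0 < L) (hid : P = -(t * D * L)) :
    0 < t * D := by
  by_contra h
  push_neg at h
  nlinarith [mul_nonneg (neg_nonneg.mpr h) hL.le]

private lemma neg_aux {t s L P : ℝ} (hP : P < 0) (hL : 0 < L) (hid : P = t * s * (L * L)) :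
    t * s < 0 := by
  by_contra h
  push_neg at h
  nlinarith [mul_nonneg (mul_nonneg h hL.le) hL.le]

private lemma same_sign_aux {x y D : ℝ} (hx : 0 < x * D) (hy : 0 < y * D) : 0 < x * y := by
  nlinarith [mul_pos hx hy, sq_nonneg D]

set_option maxHeartbeats 1000000 in
theorem napoleon_homothety_single
    (A B C A₁ B₁ C₁ C₁' : EuclideanSpace ℝ (Fin 2))
    (hABC : AffineIndependent ℝ ![A, B, C])
    (hA₁ : dist A₁ B = dist B C) (hA₁' : dist A₁ C = dist B C)
    (hB₁ : dist A B₁ = dist A C) (hB₁' : dist B₁ C = dist A C)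
    (hC₁ : dist A C₁ = dist A B) (hC₁' : dist B C₁ = dist A B)
    (hsideA : (affineSpan ℝ {B, C}).SOppSide A A₁)
    (hsideB : (affineSpan ℝ {C, A}).SOppSide B B₁)
    (hsideC : (affineSpan ℝ {A, B}).SOppSide C C₁)
    (hC₁'dA : dist A C₁' = dist A B) (hC₁'dB : dist B C₁' = dist A B)
    (hC₁'side : (affineSpan ℝ {A, B}).SSameSide C₁' C)
    (A₂ B₂ Cstar G₃' G : EuclideanSpace ℝ (Fin 2))
    (hA₂ : A₂ = (2:ℝ)⁻¹ • (B₁ + C₁))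
    (hB₂ : B₂ = (2:ℝ)⁻¹ • (C₁ + A₁))
    (hCstar : Cstar = (3:ℝ)⁻¹ • (A₂ + B₂ + C))
    (hG₃' : G₃' = (3:ℝ)⁻¹ • (A + B + C₁'))
    (hG : G = (3:ℝ)⁻¹ • (A + B + C)) :
    Cstar - G = (-(1/2) : ℝ) • (G₃' - G) := by
  have hInj := hABC.injective
  have hAB : A ≠ B := fun h =>
    absurd (hInj (show ![A, B, C] 0 = ![A, B, C] 1 by simpa using h)) (by decide)
  have hBC : B ≠ C := fun h =>
    absurd (hInj (show ![A, B, C] 1 = ![A, B, C] 2 by simpa using h)) (by decide)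
  have hCA : C ≠ A := fun h =>
    absurd (hInj (show ![A, B, C] 2 = ![A, B, C] 0 by simpa using h)) (by decide)
  -- apex representations
  obtain ⟨ta, hta2, ha0, ha1⟩ := apex_pt (X := B) (Y := C) (P := A₁) hBC hA₁ hA₁'
  obtain ⟨tb, htb2, hb0, hb1⟩ := apex_pt (X := C) (Y := A) (P := B₁) hCA
    (by rw [dist_comm C A]; exact hB₁') (by rw [dist_comm C A, dist_comm B₁ A]; exact hB₁)
  obtain ⟨tc, htc2, hc0, hc1⟩ := apex_pt (X := A) (Y := B) (P := C₁) hAB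
    (by rw [dist_comm C₁ A]; exact hC₁) (by rw [dist_comm C₁ B]; exact hC₁')
  obtain ⟨t', ht'2, hq0, hq1⟩ := apex_pt (X := A) (Y := B) (P := C₁') hAB
    (by rw [dist_comm C₁' A]; exact hC₁'dA) (by rw [dist_comm C₁' B]; exact hC₁'dB)
  -- sign conditions
  have s1 := oppside_sign hBC hsideA
  rw [ha0, ha1] at s1
  have pa : 0 < ta * ((A 0 - B 0) * (C 1 - B 1) - (A 1 - B 1) * (C 0 - B 0)) :=
    pos_aux s1 (ne_coord hBC) (by ring)
  have s2 := oppside_sign hCA hsideB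
  rw [hb0, hb1] at s2
  have pb : 0 < tb * ((A 0 - B 0) * (C 1 - B 1) - (A 1 - B 1) * (C 0 - B 0)) :=
    pos_aux s2 (ne_coord hCA) (by ring)
  have s3 := oppside_sign hAB hsideC
  rw [hc0, hc1] at s3
  have pc : 0 < tc * ((A 0 - B 0) * (C 1 - B 1) - (A 1 - B 1) * (C 0 - B 0)) :=
    pos_aux s3 (ne_coord hAB) (by ring)
  have s4 := oppside_sign hAB (hC₁'side.trans_sOppSide hsideC)
  rw [hq0, hq1, hc0, hc1] at s4
  have pq : t' * tc < 0 := neg_aux s4 (ne_coord hAB) (by ring)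
  -- equalities of the rotation parameters
  have htb : tb = ta := sign_eq_of_sq htb2 hta2 (same_sign_aux pb pa)
  have htc : tc = ta := sign_eq_of_sq htc2 hta2 (same_sign_aux pc pa)
  have ht' : t' = -tc := sign_eq_of_sq ht'2 (by rw [neg_pow]; simpa using htc2) (by nlinarith [pq])
  -- conclude by coordinates
  subst hA₂ hB₂ hCstar hG₃' hG
  rw [htb] at hb0 hb1
  rw [htc] at hc0 hc1 ht'
  rw [ht'] at hq0 hq1
  ext i
  fin_cases i
  · show (3:ℝ)⁻¹ * ((2:ℝ)⁻¹ * (B₁ 0 + C₁ 0) + (2:ℝ)⁻¹ * (C₁ 0 + A₁ 0) + C 0)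
        - (3:ℝ)⁻¹ * (A 0 + B 0 + C 0)
      = (-(1/2) : ℝ) * ((3:ℝ)⁻¹ * (A 0 + B 0 + C₁' 0) - (3:ℝ)⁻¹ * (A 0 + B 0 + C 0))
    rw [ha0, hb0, hc0, hq0]; ring
  · show (3:ℝ)⁻¹ * ((2:ℝ)⁻¹ * (B₁ 1 + C₁ 1) + (2:ℝ)⁻¹ * (C₁ 1 + A₁ 1) + C 1)
        - (3:ℝ)⁻¹ * (A 1 + B 1 + C 1)
      = (-(1/2) : ℝ) * ((3:ℝ)⁻¹ * (A 1 + B 1 + C₁' 1) - (3:ℝ)⁻¹ * (A 1 + B 1 + C 1))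
    rw [ha1, hb1, hc1, hq1]; ring
end
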